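/- Let f(x) = 1 + x log₂ x + (1/2 − x) log₂(1/2 − x) and g(x) = 1 + (3/4 − x) log₂(3/4 − x) + (1/4 + x) log₂(1/4 + x) for x ∈ (0, 1/2), x ≠ 1/4. Then lim_{x → 1/4} f(x)/g(x) = 2. -/

import Mathlib

noncomputable def fNum (x : ℝ) : ℝ :=
  1 + x * Real.logb 2 x + (1/2 - x) * Real.logb 2 (1/2 - x)

noncomputable def gDen (x : ℝ) : ℝ :=
  1 + (3/4 - x) * Real.logb 2 (3/4 - x) + (1/4 + x) * Real.logb 2 (1/4 + x)

open Real Filter Set Topology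

noncomputable def f1 (x : ℝ) : ℝ := (Real.log x - Real.log (1/2 - x)) / Real.log 2
noncomputable def g1 (x : ℝ) : ℝ := (Real.log (1/4 + x) - Real.log (3/4 - x)) / Real.log 2
noncomputable def f2 (x : ℝ) : ℝ := (x⁻¹ + (1/2 - x)⁻¹) / Real.log 2
noncomputable def g2 (x : ℝ) : ℝ := ((1/4 + x)⁻¹ + (3/4 - x)⁻¹) / Real.log 2

lemma log2_pos : (0:ℝ) < Real.log 2 := Real.log_pos (by norm_num)

lemma hd_fNum {x : ℝ} (hx : x ∈ Ioo (1/8 : ℝ) (3/8)) : HasDerivAt fNum (f1 x) x := by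
  obtain ⟨h1, h2⟩ := hx
  have hx0 : x ≠ 0 := by linarith
  have hx2 : (1/2 - x) ≠ 0 := by intro h; nlinarith [h]
  have d1 : HasDerivAt (fun y : ℝ => y * Real.logb 2 y)
      (Real.logb 2 x + x * (x⁻¹ / Real.log 2)) x := by
    simpa [Real.logb, Pi.mul_def] using (hasDerivAt_id' x).mul
      ((Real.hasDerivAt_log hx0).div_const (Real.log 2))
  have d2 : HasDerivAt (fun y : ℝ => (1/2 - y) * Real.logb 2 (1/2 - y))
      ((-1) * Real.logb 2 (1/2 - x) + (1/2 - x) * ((1/2 - x)⁻¹ / Real.log 2 * (-1))) x := by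
    have inner : HasDerivAt (fun y : ℝ => (1/2 : ℝ) - y) (-1) x := by
      simpa using (hasDerivAt_id x).const_sub (1/2 : ℝ)
    have dlog : HasDerivAt (fun y : ℝ => Real.logb 2 (1/2 - y))
        ((1/2 - x)⁻¹ / Real.log 2 * (-1)) x :=
      (((Real.hasDerivAt_log hx2).div_const (Real.log 2)).comp x inner)
    exact inner.mul dlog
  have := (d1.add d2).const_add (1 : ℝ)
  have heq : Real.logb 2 x + x * (x⁻¹ / Real.log 2) +
      ((-1) * Real.logb 2 (1/2 - x) + (1/2 - x) * ((1/2 - x)⁻¹ / Real.log 2 * (-1))) = f1 x := by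
    have e1 : x * (x⁻¹ / Real.log 2) = 1 / Real.log 2 := by
      rw [mul_div_assoc', mul_inv_cancel₀ hx0]
    have e2 : (1/2 - x) * ((1/2 - x)⁻¹ / Real.log 2 * (-1)) = -(1 / Real.log 2) := by
      rw [mul_comm _ (-1 : ℝ), ← mul_assoc, mul_comm (1/2 - x) (-1:ℝ), mul_assoc,
        mul_div_assoc', mul_inv_cancel₀ hx2]
      ring
    rw [e1, e2]
    simp only [Real.logb, f1]
    ring
  rw [heq] at this
  convert this using 1
  case e'_4 => ext <;> rfl
  case e'_5 => ext; rfl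
  ext y
  simp [fNum]
  ring

lemma hd_gDen {x : ℝ} (hx : x ∈ Ioo (1/8 : ℝ) (3/8)) : HasDerivAt gDen (g1 x) x := by
  obtain ⟨h1, h2⟩ := hx
  have hx0 : (3/4 - x) ≠ 0 := by intro h; nlinarith [h]
  have hx2 : (1/4 + x) ≠ 0 := by intro h; nlinarith [h]
  have d1 : HasDerivAt (fun y : ℝ => (3/4 - y) * Real.logb 2 (3/4 - y))
      ((-1) * Real.logb 2 (3/4 - x) + (3/4 - x) * ((3/4 - x)⁻¹ / Real.log 2 * (-1))) x := by
    have inner : HasDerivAt (fun y : ℝ => (3/4 : ℝ) - y) (-1) x := by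
      simpa using (hasDerivAt_id x).const_sub (3/4 : ℝ)
    have dlog : HasDerivAt (fun y : ℝ => Real.logb 2 (3/4 - y))
        ((3/4 - x)⁻¹ / Real.log 2 * (-1)) x :=
      (((Real.hasDerivAt_log hx0).div_const (Real.log 2)).comp x inner)
    exact inner.mul dlog
  have d2 : HasDerivAt (fun y : ℝ => (1/4 + y) * Real.logb 2 (1/4 + y))
      (1 * Real.logb 2 (1/4 + x) + (1/4 + x) * ((1/4 + x)⁻¹ / Real.log 2 * 1)) x := by
    have inner : HasDerivAt (fun y : ℝ => (1/4 : ℝ) + y) 1 x := by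
      simpa using (hasDerivAt_id x).const_add (1/4 : ℝ)
    have dlog : HasDerivAt (fun y : ℝ => Real.logb 2 (1/4 + y))
        ((1/4 + x)⁻¹ / Real.log 2 * 1) x :=
      (((Real.hasDerivAt_log hx2).div_const (Real.log 2)).comp x inner)
    exact inner.mul dlog
  have := (d1.add d2).const_add (1 : ℝ)
  have heq : (-1) * Real.logb 2 (3/4 - x) + (3/4 - x) * ((3/4 - x)⁻¹ / Real.log 2 * (-1)) +
      (1 * Real.logb 2 (1/4 + x) + (1/4 + x) * ((1/4 + x)⁻¹ / Real.log 2 * 1)) = g1 x := by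
    have e1 : (3/4 - x) * ((3/4 - x)⁻¹ / Real.log 2 * (-1)) = -(1 / Real.log 2) := by
      rw [mul_comm _ (-1 : ℝ), ← mul_assoc, mul_comm (3/4 - x) (-1:ℝ), mul_assoc,
        mul_div_assoc', mul_inv_cancel₀ hx0]
      ring
    have e2 : (1/4 + x) * ((1/4 + x)⁻¹ / Real.log 2 * 1) = 1 / Real.log 2 := by
      rw [mul_one, mul_div_assoc', mul_inv_cancel₀ hx2]
    rw [e1, e2]
    simp only [Real.logb, g1]
    ring
  rw [heq] at this
  convert this using 1
  case e'_4 => ext <;> rfl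
  case e'_5 => ext; rfl
  ext y
  simp [gDen]
  ring

lemma hd_f1 {x : ℝ} (hx : x ∈ Ioo (1/8 : ℝ) (3/8)) : HasDerivAt f1 (f2 x) x := by
  obtain ⟨h1, h2⟩ := hx
  have hx0 : x ≠ 0 := by linarith
  have hx2 : (1/2 - x) ≠ 0 := by intro h; nlinarith [h]
  have inner : HasDerivAt (fun y : ℝ => (1/2 : ℝ) - y) (-1) x := by
    simpa using (hasDerivAt_id x).const_sub (1/2 : ℝ)
  have d2 : HasDerivAt (fun y : ℝ => Real.log (1/2 - y)) ((1/2 - x)⁻¹ * (-1)) x :=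
    (Real.hasDerivAt_log hx2).comp x inner
  have := ((Real.hasDerivAt_log hx0).sub d2).div_const (Real.log 2)
  have heq : (x⁻¹ - (1/2 - x)⁻¹ * (-1)) / Real.log 2 = f2 x := by
    simp only [f2]; ring
  rw [heq] at this
  exact this
lemma hd_g1 {x : ℝ} (hx : x ∈ Ioo (1/8 : ℝ) (3/8)) : HasDerivAt g1 (g2 x) x := by
  obtain ⟨h1, h2⟩ := hx
  have hx0 : (3/4 - x) ≠ 0 := by intro h; nlinarith [h]
  have hx2 : (1/4 + x) ≠ 0 := by intro h; nlinarith [h]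
  have inner1 : HasDerivAt (fun y : ℝ => (1/4 : ℝ) + y) 1 x := by
    simpa using (hasDerivAt_id x).const_add (1/4 : ℝ)
  have d1 : HasDerivAt (fun y : ℝ => Real.log (1/4 + y)) ((1/4 + x)⁻¹ * 1) x :=
    (Real.hasDerivAt_log hx2).comp x inner1
  have inner2 : HasDerivAt (fun y : ℝ => (3/4 : ℝ) - y) (-1) x := by
    simpa using (hasDerivAt_id x).const_sub (3/4 : ℝ)
  have d2 : HasDerivAt (fun y : ℝ => Real.log (3/4 - y)) ((3/4 - x)⁻¹ * (-1)) x :=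
    (Real.hasDerivAt_log hx0).comp x inner2
  have := (d1.sub d2).div_const (Real.log 2)
  have heq : ((1/4 + x)⁻¹ * 1 - (3/4 - x)⁻¹ * (-1)) / Real.log 2 = g2 x := by
    simp only [g2]; ring
  rw [heq] at this
  exact this

lemma mem_eventually : ∀ᶠ x in nhdsWithin (1/4 : ℝ) {(1/4 : ℝ)}ᶜ, x ∈ Ioo (1/8 : ℝ) (3/8) :=
  eventually_nhdsWithin_of_eventually_nhds
    (Ioo_mem_nhds (by norm_num) (by norm_num))

/-- The entanglement-assistance ratio for covariant qubit Pauli channels along the line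
`p₃ = 1/2 − p₀` tends to `2` as `x → 1/4`. -/
theorem tendsto_fNum_div_gDen :
    Filter.Tendsto (fun x : ℝ => fNum x / gDen x)
      (nhdsWithin (1/4 : ℝ) {(1/4 : ℝ)}ᶜ) (nhds 2) := by
  have hlog2 := log2_pos
  -- inner lhopital: f1/g1 → 2
  have inner : Tendsto (fun x => f1 x / g1 x) (nhdsWithin (1/4 : ℝ) {(1/4 : ℝ)}ᶜ) (nhds 2) := by
    apply HasDerivAt.lhopital_zero_nhdsNE (f' := f2) (g' := g2)
    · exact mem_eventually.mono fun x hx => hd_f1 hx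
    · exact mem_eventually.mono fun x hx => hd_g1 hx
    · refine mem_eventually.mono fun x hx => ?_
      obtain ⟨h1, h2⟩ := hx
      have : (0:ℝ) < (1/4 + x)⁻¹ + (3/4 - x)⁻¹ :=
        add_pos (inv_pos.mpr (by linarith)) (inv_pos.mpr (by linarith))
      exact ne_of_gt (div_pos this hlog2)
    · have hc : ContinuousAt f1 (1/4 : ℝ) := by
        apply ContinuousAt.div_const
        exact (Real.continuousAt_log (by norm_num)).sub
          ((Real.continuousAt_log (by norm_num)).comp
            ((continuousAt_const.sub continuousAt_id)))
      have h0 : f1 (1/4) = 0 := by norm_num [f1]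
      have := hc.tendsto.mono_left (nhdsWithin_le_nhds (s := {(1/4:ℝ)}ᶜ))
      rwa [h0] at this
    · have hc : ContinuousAt g1 (1/4 : ℝ) := by
        apply ContinuousAt.div_const
        exact ((Real.continuousAt_log (by norm_num)).comp
            ((continuousAt_const.add continuousAt_id))).sub
          ((Real.continuousAt_log (by norm_num)).comp
            ((continuousAt_const.sub continuousAt_id)))
      have h0 : g1 (1/4) = 0 := by norm_num [g1]
      have := hc.tendsto.mono_left (nhdsWithin_le_nhds (s := {(1/4:ℝ)}ᶜ))
      rwa [h0] at this
    · -- f2/g2 → 2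
      have hc : ContinuousAt (fun x => f2 x / g2 x) (1/4 : ℝ) := by
        have hf2 : ContinuousAt f2 (1/4 : ℝ) := by
          apply ContinuousAt.div_const
          exact ((continuousAt_id.inv₀ (by norm_num)).add
            ((continuousAt_const.sub continuousAt_id).inv₀ (by norm_num)))
        have hg2 : ContinuousAt g2 (1/4 : ℝ) := by
          apply ContinuousAt.div_const
          exact (((continuousAt_const.add continuousAt_id).inv₀ (by norm_num)).add
            ((continuousAt_const.sub continuousAt_id).inv₀ (by norm_num)))
        apply hf2.div hg2
        have : g2 (1/4) = 4 / Real.log 2 := by simp only [g2]; norm_num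
        rw [this]
        positivity
      have h2' : f2 (1/4) / g2 (1/4) = 2 := by
        have hf : f2 (1/4) = 8 / Real.log 2 := by simp only [f2]; norm_num
        have hg : g2 (1/4) = 4 / Real.log 2 := by simp only [g2]; norm_num
        have hl2 : Real.log 2 ≠ 0 := ne_of_gt hlog2
        rw [hf, hg]
        field_simp
        ring
      have := hc.tendsto.mono_left (nhdsWithin_le_nhds (s := {(1/4:ℝ)}ᶜ))
      rwa [h2'] at this
  apply HasDerivAt.lhopital_zero_nhdsNE (f' := f1) (g' := g1)
  · exact mem_eventually.mono fun x hx => hd_fNum hx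
  · exact mem_eventually.mono fun x hx => hd_gDen hx
  · -- g1 x ≠ 0 for x ≠ 1/4 near
    have hne : ∀ᶠ x in nhdsWithin (1/4 : ℝ) {(1/4 : ℝ)}ᶜ, x ≠ (1/4 : ℝ) :=
      eventually_mem_nhdsWithin.mono fun x hx => hx
    filter_upwards [mem_eventually, hne] with x hx hxne
    obtain ⟨h1, h2⟩ := hx
    have hp1 : (0:ℝ) < 1/4 + x := by linarith
    have hp2 : (0:ℝ) < 3/4 - x := by linarith
    rcases lt_or_gt_of_ne hxne with h | h
    · have : Real.log (1/4 + x) < Real.log (3/4 - x) :=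
        Real.log_lt_log hp1 (by linarith)
      exact ne_of_lt (div_neg_of_neg_of_pos (by linarith) hlog2)
    · have : Real.log (3/4 - x) < Real.log (1/4 + x) :=
        Real.log_lt_log hp2 (by linarith)
      exact ne_of_gt (div_pos (by linarith) hlog2)
  · -- fNum → 0
    have hc : ContinuousAt fNum (1/4 : ℝ) := by
      have hlogb : ∀ y : ℝ, y ≠ 0 → ContinuousAt (Real.logb 2) y := fun y hy =>
        (Real.continuousAt_log hy).div_const _
      exact (continuousAt_const.add
        (continuousAt_id.mul (hlogb _ (by norm_num)))).add
        ((continuousAt_const.sub continuousAt_id).mul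
          ((hlogb _ (by norm_num)).comp (continuousAt_const.sub continuousAt_id)))
    have hval : fNum (1/4) = 0 := by
      have h4 : Real.logb 2 (4 : ℝ) = 2 := by
        have hl4 : Real.log (4:ℝ) = 2 * Real.log 2 := by
          rw [show (4:ℝ) = 2^(2:ℕ) by norm_num, Real.log_pow]; norm_num
        rw [Real.logb, hl4, mul_div_assoc, div_self (ne_of_gt hlog2), mul_one]
      have h14 : Real.logb 2 (1/4 : ℝ) = -2 := by
        rw [show (1/4 : ℝ) = (4:ℝ)⁻¹ by norm_num, Real.logb_inv, h4]
      norm_num [fNum, h4, h14]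
    have := hc.tendsto.mono_left (nhdsWithin_le_nhds (s := {(1/4:ℝ)}ᶜ))
    rwa [hval] at this
  · -- gDen → 0
    have hc : ContinuousAt gDen (1/4 : ℝ) := by
      have hlogb : ∀ y : ℝ, y ≠ 0 → ContinuousAt (Real.logb 2) y := fun y hy =>
        (Real.continuousAt_log hy).div_const _
      exact (continuousAt_const.add
        ((continuousAt_const.sub continuousAt_id).mul
          ((hlogb _ (by norm_num)).comp (continuousAt_const.sub continuousAt_id)))).add
        ((continuousAt_const.add continuousAt_id).mul
          ((hlogb _ (by norm_num)).comp (continuousAt_const.add continuousAt_id)))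
    have hval : gDen (1/4) = 0 := by
      have h2' : Real.logb 2 (2 : ℝ) = 1 := by
        rw [Real.logb, div_self (ne_of_gt hlog2)]
      have h12 : Real.logb 2 (1/2 : ℝ) = -1 := by
        rw [show (1/2 : ℝ) = (2:ℝ)⁻¹ by norm_num, Real.logb_inv, h2']
      norm_num [gDen, h2', h12]
    have := hc.tendsto.mono_left (nhdsWithin_le_nhds (s := {(1/4:ℝ)}ᶜ))
    rwa [hval] at this
  · exact inner
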